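/- Let H be a matrix over ZMod 2 with column index set J, let S ⊆ J be a set of (erased) columns, and let p ∈ S. Then the following are equivalent: (i) every vector x in the kernel of H whose support is contained in S satisfies x(p) = 0 (i.e., the ML decoder can recover bit p from the unerased positions); (ii) the row space of H over ZMod 2 contains a vector h whose support intersects S exactly in {p}. -/
import Mathlib

open Matrix

/-- For a matrix `H` over `ZMod 2`, a set `S` of (erased) columns and
`p ∈ S`, the following are equivalent: (i) every `x` in the kernel of `H` supported
inside `S` has `x p = 0` (ML recovery of bit `p`); (ii) the row space of `H` contains a
vector `h` whose support intersects `S` exactly in `{p}`. -/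
theorem ml_recoverable_iff_row_space_check {ρ J : Type*} [Fintype ρ] [Fintype J]
    (H : Matrix ρ J (ZMod 2)) (S : Set J) (p : J) (hp : p ∈ S) :
    (∀ x : J → ZMod 2, H *ᵥ x = 0 → (∀ j ∉ S, x j = 0) → x p = 0) ↔
    ∃ h ∈ Submodule.span (ZMod 2) (Set.range (fun r => H r : ρ → J → ZMod 2)),
      {j : J | h j ≠ 0} ∩ S = {p} := by
  classical
  constructor
  · intro hrec
    set L : (ρ ⊕ {j : J // j ∉ S}) → ((J → ZMod 2) →ₗ[ZMod 2] ZMod 2) :=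
      Sum.elim (fun r => (LinearMap.proj r).comp H.mulVecLin)
        (fun j => LinearMap.proj j.1) with hL
    have hker : ⨅ i, LinearMap.ker (L i) ≤
        LinearMap.ker (LinearMap.proj (R := ZMod 2) (φ := fun _ : J => ZMod 2) p) := by
      intro x hx
      simp only [Submodule.mem_iInf, LinearMap.mem_ker] at hx
      have h1 : H *ᵥ x = 0 := by
        funext r
        exact hx (Sum.inl r)
      have h2 : ∀ j ∉ S, x j = 0 := fun j hj => hx (Sum.inr ⟨j, hj⟩)
      exact hrec x h1 h2
    have hmem := mem_span_of_iInf_ker_le_ker hker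
    obtain ⟨c, hc⟩ := (Submodule.mem_span_range_iff_exists_fun _).1 hmem
    set h : J → ZMod 2 := fun j => ∑ r, c (Sum.inl r) * H r j with hh
    have key : ∀ j ∈ S, h j = (Pi.single j (1 : ZMod 2) : J → ZMod 2) p := by
      intro j hj
      have := LinearMap.congr_fun hc (Pi.single j (1 : ZMod 2))
      simp only [LinearMap.coe_sum, Finset.sum_apply, LinearMap.smul_apply,
        Fintype.sum_sum_type, hL, Sum.elim_inl, Sum.elim_inr, LinearMap.comp_apply,
        Matrix.mulVecLin_apply, Matrix.mulVec_single, LinearMap.proj_apply,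
        smul_eq_mul, mul_one] at this
      rw [← this, hh]
      have hz : ∀ j' : {j : J // j ∉ S}, c (Sum.inr j') * (Pi.single j (1 : ZMod 2) : J → ZMod 2) j'.1 = 0 := by
        intro j'
        rw [Pi.single_eq_of_ne (by rintro rfl; exact j'.2 hj), mul_zero]
      simp [hz]
    refine ⟨h, ?_, ?_⟩
    · refine (Submodule.mem_span_range_iff_exists_fun _).2 ⟨fun r => c (Sum.inl r), ?_⟩
      funext j
      simp [hh, Finset.sum_apply]
    · ext j
      simp only [Set.mem_inter_iff, Set.mem_setOf_eq, Set.mem_singleton_iff]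
      constructor
      · rintro ⟨hne, hjS⟩
        by_contra hjp
        exact hne (by rw [key j hjS, Pi.single_eq_of_ne (fun hq => hjp hq.symm)])
      · rintro rfl
        exact ⟨by rw [key _ hp, Pi.single_eq_same]; exact one_ne_zero, hp⟩
  · rintro ⟨h, hspan, hS⟩ x hx hxS
    have hdot : ∀ g ∈ Submodule.span (ZMod 2) (Set.range (fun r => H r : ρ → J → ZMod 2)),
        ∑ j, g j * x j = 0 := by
      intro g hg
      induction hg using Submodule.span_induction with
      | mem g hg =>
          obtain ⟨r, rfl⟩ := hg
          have := congr_fun hx r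
          simpa [Matrix.mulVec, dotProduct] using this
      | zero => simp
      | add g g' _ _ hg hg' => simp [add_mul, Finset.sum_add_distrib, hg, hg']
      | smul a g _ hg =>
          simp only [Pi.smul_apply, smul_eq_mul, mul_assoc]
          rw [← Finset.mul_sum, hg, mul_zero]
    have hdoth := hdot h hspan
    have hsum : ∑ j, h j * x j = h p * x p := by
      refine Finset.sum_eq_single p (fun j _ hjp => ?_) (by simp)
      by_cases hjS : j ∈ S
      · have : h j = 0 := by
          by_contra hne
          have : j ∈ ({p} : Set J) := hS ▸ ⟨hne, hjS⟩
          exact hjp this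
        rw [this, zero_mul]
      · rw [hxS j hjS, mul_zero]
    have hpne : h p ≠ 0 := by
      have : p ∈ {j : J | h j ≠ 0} ∩ S := hS ▸ rfl
      exact this.1
    have := hsum ▸ hdoth
    rcases mul_eq_zero.1 this with h0 | h0
    · exact absurd h0 hpne
    · exact h0
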